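/- Let x_1, …, x_m ∈ ℝ^n, let y = [y_1, …, y_m] with y_i ∈ {−1, 1}, set Y = diag(y_1, …, y_m), K = (⟨x_i, x_j⟩)_{i,j=1,…,m}, and let d be a positive integer. The constrained maximization problem max over a ∈ ℝ^m of ( ‖a‖_1 − (1/2) a^T Y K^∘d Y a ) subject to Σ_{i=1}^m y_i a_i = 0 and a_1, …, a_m ≥ 0 fails to attain its supremum if and only if there exists a ∈ ℝ^m with a ≥ 0 componentwise, a ≠ 0, Σ_{i=1}^m y_i a_i = 0, and K^∘d Y a = 0. -/

import Mathlib

open scoped Matrix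

private lemma kd_psd {n m : ℕ} (x : Fin m → Fin n → ℝ)
    (K : Matrix (Fin m) (Fin m) ℝ) (hK : ∀ i j, K i j = ∑ k, x i k * x j k)
    (Kd : Matrix (Fin m) (Fin m) ℝ) (d : ℕ)
    (hKd : ∀ i j, Kd i j = K i j ^ d) : Kd.PosSemidef := by
  classical
  set B : Matrix (Fin d → Fin n) (Fin m) ℝ :=
    Matrix.of fun f i => ∏ t, x i (f t) with hB
  have hEq : Kd = Bᴴ * B := by
    ext i j
    rw [hKd, hK, Matrix.mul_apply]
    have h1 : (∑ k, x i k * x j k) ^ d = ∏ _t : Fin d, (∑ k, x i k * x j k) := by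
      simp [Finset.prod_const]
    rw [h1, Finset.prod_univ_sum, Fintype.piFinset_univ]
    apply Finset.sum_congr rfl
    intro f _
    simp only [hB, Matrix.conjTranspose_apply, Matrix.of_apply, star_trivial]
    rw [Finset.prod_mul_distrib]
  rw [hEq]
  exact Matrix.posSemidef_conjTranspose_mul_self B

theorem dual_problem_infeasible_iff (n m : ℕ)
    (x : Fin m → Fin n → ℝ) (y : Fin m → ℝ) (hy : ∀ i, y i = 1 ∨ y i = -1)
    (K : Matrix (Fin m) (Fin m) ℝ) (hK : ∀ i j, K i j = ∑ k, x i k * x j k)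
    (Kd : Matrix (Fin m) (Fin m) ℝ) (d : ℕ) (hd : 0 < d)
    (hKd : ∀ i j, Kd i j = K i j ^ d)
    (Y : Matrix (Fin m) (Fin m) ℝ) (hY : Y = Matrix.diagonal y) :
    ¬ (∃ a : Fin m → ℝ,
        ((∑ i, y i * a i = 0) ∧ ∀ i, 0 ≤ a i) ∧
        ∀ a' : Fin m → ℝ, ((∑ i, y i * a' i = 0) ∧ ∀ i, 0 ≤ a' i) →
          (∑ i, |a' i|) - (1 / 2) * dotProduct a' ((Y * Kd * Y).mulVec a') ≤
          (∑ i, |a i|) - (1 / 2) * dotProduct a ((Y * Kd * Y).mulVec a)) ↔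
    (∃ a : Fin m → ℝ, (∀ i, 0 ≤ a i) ∧ a ≠ 0 ∧ (∑ i, y i * a i = 0) ∧
        (Kd * Y).mulVec a = 0) := by
  classical
  have hy0 : ∀ i, y i ≠ 0 := fun i => by rcases hy i with h | h <;> rw [h] <;> norm_num
  have hPSDKd : Kd.PosSemidef := kd_psd x K hK Kd d hKd
  have hYH : Yᴴ = Y := by
    rw [hY, Matrix.diagonal_conjTranspose]
    simp
  have hPSD : (Y * Kd * Y).PosSemidef := by
    have h := hPSDKd.mul_mul_conjTranspose_same Y
    rwa [hYH] at h
  set q : (Fin m → ℝ) → ℝ := fun a => dotProduct a ((Y * Kd * Y).mulVec a) with hqdef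
  set f : (Fin m → ℝ) → ℝ := fun a => (∑ i, |a i|) - (1 / 2) * q a with hfdef
  have hfeq : ∀ a : Fin m → ℝ,
      (∑ i, |a i|) - (1 / 2) * dotProduct a ((Y * Kd * Y).mulVec a) = f a :=
    fun _ => rfl
  simp only [hfeq]
  have hq0 : ∀ a, 0 ≤ q a := fun a => by simpa using hPSD.dotProduct_mulVec_nonneg a
  have hqzero : ∀ a : Fin m → ℝ, q a = 0 ↔ (Kd * Y).mulVec a = 0 := by
    intro a
    have h1 := hPSD.dotProduct_mulVec_zero_iff a
    rw [star_trivial] at h1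
    have hMa : (Y * Kd * Y).mulVec a = Y.mulVec ((Kd * Y).mulVec a) := by
      rw [Matrix.mulVec_mulVec, ← Matrix.mul_assoc]
    constructor
    · intro h
      have h2 : (Y * Kd * Y).mulVec a = 0 := h1.mp h
      rw [hMa] at h2
      funext i
      have h3 := congrFun h2 i
      simp only [Pi.zero_apply] at h3 ⊢
      rw [hY, Matrix.mulVec_diagonal] at h3
      rw [hY]
      exact (mul_eq_zero.mp h3).resolve_left (hy0 i)
    · intro h
      apply h1.mpr
      rw [hMa, h, Matrix.mulVec_zero]
  have hqsmul : ∀ (c : ℝ) (a : Fin m → ℝ), q (c • a) = c ^ 2 * q a := by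
    intro c a
    show dotProduct (c • a) ((Y * Kd * Y).mulVec (c • a))
        = c ^ 2 * dotProduct a ((Y * Kd * Y).mulVec a)
    rw [Matrix.mulVec_smul, dotProduct_smul, smul_dotProduct]
    simp only [smul_eq_mul]
    ring
  have hq00 : q 0 = 0 := by
    show dotProduct (0 : Fin m → ℝ) _ = 0
    simp
  have hf0 : f 0 = 0 := by simp [hfdef, hq00]
  have hqc : Continuous q := by
    simp only [hqdef, dotProduct, Matrix.mulVec]
    exact continuous_finset_sum _ fun i _ => (continuous_apply i).mul
      (continuous_finset_sum _ fun j _ => continuous_const.mul (continuous_apply j))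
  have hfc : Continuous f :=
    (continuous_finset_sum _ fun i _ => (continuous_apply i).abs).sub
      (continuous_const.mul hqc)
  have hsumc : Continuous fun a : Fin m → ℝ => ∑ i, a i :=
    continuous_finset_sum _ fun i _ => continuous_apply i
  have hysumc : Continuous fun a : Fin m → ℝ => ∑ i, y i * a i :=
    continuous_finset_sum _ fun i _ => continuous_const.mul (continuous_apply i)
  have hnonnegcl : IsClosed {a : Fin m → ℝ | ∀ i, 0 ≤ a i} := by
    have h : {a : Fin m → ℝ | ∀ i, 0 ≤ a i} = ⋂ i, {a | 0 ≤ a i} := by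
      ext a; simp [Set.mem_iInter]
    rw [h]
    exact isClosed_iInter fun i => isClosed_le continuous_const (continuous_apply i)
  constructor
  · -- not attained → exists kernel vector
    intro hnot
    by_contra hker
    apply hnot
    have hqpos : ∀ a : Fin m → ℝ, (∑ i, y i * a i = 0) → (∀ i, 0 ≤ a i) → a ≠ 0 → 0 < q a := by
      intro a h1 h2 h3
      rcases (hq0 a).lt_or_eq with h | h
      · exact h
      · exact absurd ⟨a, h2, h3, h1, (hqzero a).mp h.symm⟩ hker
    by_cases hall : ∀ a' : Fin m → ℝ, ((∑ i, y i * a' i = 0) ∧ ∀ i, 0 ≤ a' i) → a' = 0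
    · refine ⟨0, ⟨by simp, fun i => le_refl 0⟩, fun a' ha' => ?_⟩
      rw [hall a' ha']
    · push_neg at hall
      obtain ⟨a₀, hfeas₀, hne₀⟩ := hall
      have hs₀ : 0 < ∑ i, a₀ i := by
        rcases (Finset.sum_nonneg fun i _ => hfeas₀.2 i).lt_or_eq with h | h
        · exact h
        · exfalso; apply hne₀; funext i
          exact (Finset.sum_eq_zero_iff_of_nonneg fun i _ => hfeas₀.2 i).mp h.symm i
            (Finset.mem_univ i)
      set S : Set (Fin m → ℝ) :=
        {a | (∑ i, y i * a i = 0) ∧ (∀ i, 0 ≤ a i) ∧ ∑ i, a i = 1} with hSdef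
      have hScl : IsClosed S := by
        have h1 : S = {a : Fin m → ℝ | ∑ i, y i * a i = 0} ∩
            ({a | ∀ i, 0 ≤ a i} ∩ {a | ∑ i, a i = 1}) := by
          ext a
          simp only [hSdef, Set.mem_setOf_eq, Set.mem_inter_iff]
        rw [h1]
        exact (isClosed_eq hysumc continuous_const).inter
          (hnonnegcl.inter (isClosed_eq hsumc continuous_const))
      have hScpt : IsCompact S := by
        have hpi : IsCompact (Set.pi Set.univ fun _ : Fin m => Set.Icc (0:ℝ) 1) :=
          isCompact_univ_pi fun _ => isCompact_Icc
        refine IsCompact.of_isClosed_subset hpi hScl ?_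
        intro a ha
        rcases ha with ⟨_, h2, h3⟩
        intro i _
        refine ⟨h2 i, ?_⟩
        calc a i ≤ ∑ j, a j := Finset.single_le_sum (fun j _ => h2 j) (Finset.mem_univ i)
          _ = 1 := h3
      -- u₀ ∈ S
      have hu₀ : (∑ i, a₀ i)⁻¹ • a₀ ∈ S := by
        refine ⟨?_, ?_, ?_⟩
        · have h5 : ∑ i, y i * ((∑ j, a₀ j)⁻¹ • a₀) i
              = (∑ j, a₀ j)⁻¹ * ∑ i, y i * a₀ i := by
            rw [Finset.mul_sum]
            exact Finset.sum_congr rfl fun i _ => by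
              simp only [Pi.smul_apply, smul_eq_mul]; ring
          rw [h5, hfeas₀.1, mul_zero]
        · intro i
          exact mul_nonneg (inv_nonneg.mpr hs₀.le) (hfeas₀.2 i)
        · simp only [Pi.smul_apply, smul_eq_mul, ← Finset.mul_sum]
          exact inv_mul_cancel₀ hs₀.ne'
      obtain ⟨u₁, hu₁S, hu₁min⟩ := hScpt.exists_isMinOn ⟨_, hu₀⟩ hqc.continuousOn
      set ε : ℝ := q u₁ with hεdef
      have hu₁ne : u₁ ≠ 0 := by
        intro h
        have := hu₁S.2.2
        rw [h] at this
        simp at this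
      have hε : 0 < ε := hqpos u₁ hu₁S.1 hu₁S.2.1 hu₁ne
      -- key bound
      have hbound : ∀ a : Fin m → ℝ, (∑ i, y i * a i = 0) → (∀ i, 0 ≤ a i) →
          ε * (∑ i, a i) ^ 2 ≤ q a := by
        intro a h1 h2
        rcases (Finset.sum_nonneg fun i _ => h2 i).lt_or_eq with hs | hs
        · set s := ∑ i, a i with hsdef
          have hu : s⁻¹ • a ∈ S := by
            refine ⟨?_, ?_, ?_⟩
            · have h5 : ∑ i, y i * (s⁻¹ • a) i = s⁻¹ * ∑ i, y i * a i := by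
                rw [Finset.mul_sum]
                exact Finset.sum_congr rfl fun i _ => by
                  simp only [Pi.smul_apply, smul_eq_mul]; ring
              rw [h5, h1, mul_zero]
            · intro i; exact mul_nonneg (inv_nonneg.mpr hs.le) (h2 i)
            · simp only [Pi.smul_apply, smul_eq_mul, ← Finset.mul_sum]
              exact inv_mul_cancel₀ hs.ne'
          have hqa : q a = s ^ 2 * q (s⁻¹ • a) := by
            have h3 : a = s • (s⁻¹ • a) := by
              rw [smul_smul, mul_inv_cancel₀ hs.ne', one_smul]
            calc q a = q (s • (s⁻¹ • a)) := by rw [← h3]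
              _ = s ^ 2 * q (s⁻¹ • a) := hqsmul s _
          have h4 : ε ≤ q (s⁻¹ • a) := hu₁min hu
          calc ε * s ^ 2 = s ^ 2 * ε := by ring
            _ ≤ s ^ 2 * q (s⁻¹ • a) := by
                exact mul_le_mul_of_nonneg_left h4 (sq_nonneg s)
            _ = q a := hqa.symm
        · have ha : a = 0 := funext fun i =>
            (Finset.sum_eq_zero_iff_of_nonneg fun i _ => h2 i).mp hs.symm i (Finset.mem_univ i)
          rw [ha, hq00]
          simp
      -- compact feasible sublevel region
      set c : ℝ := 2 / ε with hcdef
      have hc : 0 < c := by positivity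
      set D : Set (Fin m → ℝ) :=
        {a | (∑ i, y i * a i = 0) ∧ (∀ i, 0 ≤ a i) ∧ ∑ i, a i ≤ c} with hDdef
      have hDcl : IsClosed D := by
        have h1 : D = {a : Fin m → ℝ | ∑ i, y i * a i = 0} ∩
            ({a | ∀ i, 0 ≤ a i} ∩ {a | ∑ i, a i ≤ c}) := by
          ext a
          simp only [hDdef, Set.mem_setOf_eq, Set.mem_inter_iff]
        rw [h1]
        exact (isClosed_eq hysumc continuous_const).inter
          (hnonnegcl.inter (isClosed_le hsumc continuous_const))
      have hDcpt : IsCompact D := by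
        have hpi : IsCompact (Set.pi Set.univ fun _ : Fin m => Set.Icc (0:ℝ) c) :=
          isCompact_univ_pi fun _ => isCompact_Icc
        refine IsCompact.of_isClosed_subset hpi hDcl ?_
        intro a ha
        rcases ha with ⟨_, h2, h3⟩
        intro i _
        refine ⟨h2 i, ?_⟩
        calc a i ≤ ∑ j, a j := Finset.single_le_sum (fun j _ => h2 j) (Finset.mem_univ i)
          _ ≤ c := h3
      have h0D : (0 : Fin m → ℝ) ∈ D := by
        refine ⟨by simp, fun i => le_refl 0, by simp [hc.le]⟩
      obtain ⟨b, hbD, hbmax⟩ := hDcpt.exists_isMaxOn ⟨0, h0D⟩ hfc.continuousOn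
      refine ⟨b, ⟨hbD.1, hbD.2.1⟩, ?_⟩
      intro a' ⟨h1, h2⟩
      by_cases hs' : ∑ i, a' i ≤ c
      · exact hbmax ⟨h1, h2, hs'⟩
      · push_neg at hs'
        have hfb0 : (0 : ℝ) ≤ f b := by
          have h := hbmax h0D
          simp only [Set.mem_setOf_eq] at h
          rwa [hf0] at h
        have habs : ∑ i, |a' i| = ∑ i, a' i :=
          Finset.sum_congr rfl fun i _ => abs_of_nonneg (h2 i)
        have hqb := hbound a' h1 h2
        have hs'pos : 0 < ∑ i, a' i := lt_trans hc hs'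
        have h2s : 2 < ε * (∑ i, a' i) := by
          rw [hcdef, div_lt_iff₀ hε] at hs'
          linarith [mul_comm ε (∑ i, a' i)]
        have hq2s : 2 * (∑ i, a' i) ≤ q a' := by
          have : 2 * (∑ i, a' i) ≤ ε * (∑ i, a' i) ^ 2 := by nlinarith
          linarith
        have : f a' ≤ 0 := by
          simp only [hfdef, habs]
          linarith
        linarith
  · -- kernel vector → not attained
    rintro ⟨a, ha0, hane, hsum, hker⟩ ⟨b, ⟨hbsum, hb0⟩, hmax⟩
    have hsa : 0 < ∑ i, a i := by
      rcases (Finset.sum_nonneg fun i _ => ha0 i).lt_or_eq with h | h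
      · exact h
      · exfalso; apply hane; funext i
        exact (Finset.sum_eq_zero_iff_of_nonneg fun i _ => ha0 i).mp h.symm i (Finset.mem_univ i)
    have hqa : q a = 0 := (hqzero a).mpr hker
    set t : ℝ := (|f b| + 1) / (∑ i, a i) with htdef
    have ht : 0 < t := by positivity
    have hfeas : (∑ i, y i * (t • a) i = 0) ∧ ∀ i, 0 ≤ (t • a) i := by
      constructor
      · have h5 : ∑ i, y i * (t • a) i = t * ∑ i, y i * a i := by
          rw [Finset.mul_sum]
          exact Finset.sum_congr rfl fun i _ => by
            simp only [Pi.smul_apply, smul_eq_mul]; ring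
        rw [h5, hsum, mul_zero]
      · intro i
        exact mul_nonneg ht.le (ha0 i)
    have hval : f (t • a) = |f b| + 1 := by
      have h1 : q (t • a) = 0 := by rw [hqsmul, hqa, mul_zero]
      have h2 : ∑ i, |(t • a) i| = t * ∑ i, a i := by
        rw [Finset.mul_sum]
        exact Finset.sum_congr rfl fun i _ => by
          simp [abs_of_nonneg (mul_nonneg ht.le (ha0 i)), Pi.smul_apply]
      simp only [hfdef, h1, h2, mul_zero]
      rw [htdef, div_mul_cancel₀ _ hsa.ne']
      ring
    have hle := hmax (t • a) hfeas
    rw [hval] at hle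
    have := le_abs_self (f b)
    linarith
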